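/- arXiv:1912.03228 — 3 statements merged into one kernel-verified Lean document; each statement's English description precedes it below -/
import Mathlib

section
/- Let V be a countable-dimensional complex vector space, E a basis of V whose dual family spans V_* ⊂ V^*, and let F = {0 = F₀ ⊂ F₁ ⊂ ⋯ ⊂ F_m = V} be a chain of subspaces compatible with E (each F_k spanned by a subset of E) such that there is exactly one index k₀ with dim F_{k₀}/F_{k₀−1} = ∞ (so F_{k₀−1} is finite-dimensional and F_{k₀} is finite-codimensional, cut out by finitely many elements of V_*). Then for every basis E' of V whose dual family spans V_*, there exists a basis E'' differing from E' by only finitely many vectors such that every F_k is spanned by a subset of E''. -/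
open Submodule Set

/-- Extension lemma: if a submodule and the corresponding quotient are finite-dimensional,
so is the whole space. -/
private lemma findim_ext {W : Type*} [AddCommGroup W] [Module ℂ W] (p : Submodule ℂ W)
    (h1 : FiniteDimensional ℂ p) (h2 : FiniteDimensional ℂ (W ⧸ p)) :
    FiniteDimensional ℂ W := by
  have h : Module.rank ℂ W < Cardinal.aleph0 := by
    rw [← rank_quotient_add_rank_of_divisionRing p]
    exact Cardinal.add_lt_aleph0 (Module.rank_lt_aleph0 ℂ _) (Module.rank_lt_aleph0 ℂ _)
  exact Module.rank_lt_aleph0_iff.mp h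

/-- Every finite chain of subspaces admits an adapted family of spanning sets, linearly
independent at the top. -/
private lemma adapted_flag {V : Type*} [AddCommGroup V] [Module ℂ V] :
    ∀ (n : ℕ) (G : Fin (n + 1) → Submodule ℂ V), Monotone G →
    ∃ s : Fin (n + 1) → Set V, Monotone s ∧ (∀ k, Submodule.span ℂ (s k) = G k) ∧
      LinearIndependent ℂ ((↑) : s (Fin.last n) → V) := by
  intro n
  induction n with
  | zero =>
    intro G _
    obtain ⟨b, hbt, hspan, hli⟩ := exists_linearIndependent ℂ ((G 0 : Submodule ℂ V) : Set V)
    refine ⟨fun _ => b, monotone_const, fun k => ?_, ?_⟩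
    · have hk : k = 0 := Fin.ext (Nat.lt_one_iff.mp k.isLt)
      rw [hk, hspan, Submodule.span_eq]
    · exact hli
  | succ n ih =>
    intro G hG
    obtain ⟨s, hmono, hspan, hli⟩ := ih (G ∘ Fin.castSucc)
      (hG.comp Fin.strictMono_castSucc.monotone)
    have hsub : s (Fin.last n) ⊆ (G (Fin.last (n + 1)) : Set V) := by
      intro x hx
      have hx' : x ∈ Submodule.span ℂ (s (Fin.last n)) := Submodule.subset_span hx
      rw [hspan] at hx'
      exact hG ((Fin.castSucc (Fin.last n)).le_last) hx'
    obtain ⟨b, hbt, hsb, htb, hbli⟩ := exists_linearIndepOn_id_extension hli hsub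
    have hbspan : Submodule.span ℂ b = G (Fin.last (n + 1)) := by
      refine le_antisymm (Submodule.span_le.mpr hbt) ?_
      intro x hx
      exact htb hx
    refine ⟨Fin.snoc s b, ?_, ?_, ?_⟩
    · rw [Fin.monotone_iff_le_succ]
      intro k
      induction k using Fin.lastCases with
      | last =>
        rw [Fin.succ_last]
        simp only [Fin.snoc_castSucc, Fin.snoc_last]
        exact hsb
      | cast j =>
        rw [Fin.succ_castSucc]
        simp only [Fin.snoc_castSucc]
        exact hmono (Fin.castSucc_le_succ j)
    · intro k
      induction k using Fin.lastCases with
      | last => simp only [Fin.snoc_last]; exact hbspan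
      | cast j => simp only [Fin.snoc_castSucc]; exact hspan j
    · have hsl : (Fin.snoc s b : Fin (n + 1 + 1) → Set V) (Fin.last (n + 1)) = b := by simp
      rw [hsl]
      exact hbli

/-- Let `E` be an admissible basis (dual family spanning `V_*`) of the
countable-dimensional space `V`, and `F = {0 = F₀ ⊂ ⋯ ⊂ F_m = V}` an `E`-compatible chain
with exactly one infinite-dimensional quotient `F_{k₀}/F_{k₀−1}` (all other quotients
finite-dimensional).  Then for every admissible basis `E'` there is a basis `E''` differing
from `E'` by finitely many vectors such that every `F_k` is spanned by a subset of `E''`. -/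
theorem stmt16 {ι ι' V : Type*} [Countable ι] [AddCommGroup V] [Module ℂ V]
    (E : Module.Basis ι ℂ V) (Vs : Submodule ℂ (Module.Dual ℂ V))
    (hVs : Vs = Submodule.span ℂ (Set.range fun i => E.coord i))
    {m : ℕ} (F : Fin (m + 1) → Submodule ℂ V) (hmono : Monotone F)
    (h0 : F 0 = ⊥) (htop : F (Fin.last m) = ⊤)
    (hcomp : ∀ k, ∃ S : Set ι, F k = Submodule.span ℂ (⇑E '' S))
    (k₀ : Fin m)
    (hinf : ¬ FiniteDimensional ℂ
      (↥(F k₀.succ) ⧸ Submodule.comap (F k₀.succ).subtype (F k₀.castSucc)))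
    (hfin : ∀ k : Fin m, k ≠ k₀ → FiniteDimensional ℂ
      (↥(F k.succ) ⧸ Submodule.comap (F k.succ).subtype (F k.castSucc)))
    (E' : Module.Basis ι' ℂ V)
    (hVs' : Vs = Submodule.span ℂ (Set.range fun i => E'.coord i)) :
    ∃ E'' : Module.Basis ι' ℂ V,
      (Set.range ⇑E'' \ Set.range ⇑E').Finite ∧
      (Set.range ⇑E' \ Set.range ⇑E'').Finite ∧
      ∀ k, ∃ S : Set ι', F k = Submodule.span ℂ (⇑E'' '' S) := by
  classical
  -- Step 1 : `F k` is finite-dimensional for `k ≤ k₀.castSucc`.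
  have step1 : ∀ k : Fin (m + 1), k ≤ k₀.castSucc → FiniteDimensional ℂ (F k) := by
    intro k
    induction k using Fin.induction with
    | zero => intro _; rw [h0]; infer_instance
    | succ j ihj =>
      intro hj
      have hjcs : j.castSucc ≤ k₀.castSucc := le_trans (Fin.castSucc_le_succ j) hj
      have hjc : FiniteDimensional ℂ (F j.castSucc) := ihj hjcs
      have hjne : j ≠ k₀ := by
        rintro rfl
        exact (Fin.castSucc_lt_succ (i := j)).not_ge hj
      have hq := hfin j hjne
      have hle : F j.castSucc ≤ F j.succ := hmono (Fin.castSucc_le_succ j)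
      have hp : FiniteDimensional ℂ
          (Submodule.comap (F j.succ).subtype (F j.castSucc)) :=
        LinearEquiv.finiteDimensional (Submodule.comapSubtypeEquivOfLe hle).symm
      exact findim_ext _ hp hq
  -- Step 2 : `V ⧸ F k` is finite-dimensional for `k₀.succ ≤ k`.
  have step2 : ∀ k : Fin (m + 1), k₀.succ ≤ k → FiniteDimensional ℂ (V ⧸ F k) := by
    intro k
    induction k using Fin.reverseInduction with
    | last => intro _; rw [htop]; exact inferInstance
    | cast j ihj =>
      intro hj
      have hjs : k₀.succ ≤ j.succ := le_trans hj (Fin.castSucc_le_succ j)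
      have hq1 : FiniteDimensional ℂ (V ⧸ F j.succ) := ihj hjs
      have hjne : j ≠ k₀ := by
        rintro rfl
        exact absurd (lt_of_le_of_lt hj (Fin.castSucc_lt_succ (i := j))) (lt_irrefl _)
      have hq2 := hfin j hjne
      have hle : F j.castSucc ≤ F j.succ := hmono (Fin.castSucc_le_succ j)
      -- the image of `F j.succ` in `V ⧸ F j.castSucc`
      set q : Submodule ℂ (V ⧸ F j.castSucc) := (F j.succ).map (F j.castSucc).mkQ with hqdef
      have e1 : ((V ⧸ F j.castSucc) ⧸ q) ≃ₗ[ℂ] (V ⧸ F j.succ) :=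
        Submodule.quotientQuotientEquivQuotient _ _ hle
      have hquot : FiniteDimensional ℂ ((V ⧸ F j.castSucc) ⧸ q) :=
        LinearEquiv.finiteDimensional e1.symm
      have hqfin : FiniteDimensional ℂ q := by
        set f : ↥(F j.succ) →ₗ[ℂ] V ⧸ F j.castSucc :=
          (F j.castSucc).mkQ.comp (F j.succ).subtype with hfdef
        have hker : LinearMap.ker f = Submodule.comap (F j.succ).subtype (F j.castSucc) := by
          rw [hfdef, LinearMap.ker_comp, Submodule.ker_mkQ]
        have hrange : LinearMap.range f = q := by
          rw [hfdef, LinearMap.range_comp, Submodule.range_subtype]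
        have e2 : (↥(F j.succ) ⧸ Submodule.comap (F j.succ).subtype (F j.castSucc)) ≃ₗ[ℂ] q := by
          rw [← hker, ← hrange]
          exact f.quotKerEquivRange
        exact LinearEquiv.finiteDimensional e2
      exact findim_ext q hqfin hquot
  have hA : FiniteDimensional ℂ (F k₀.castSucc) := step1 _ le_rfl
  have hBq : FiniteDimensional ℂ (V ⧸ F k₀.succ) := step2 _ le_rfl
  set B : Submodule ℂ V := F k₀.succ with hBdef
  -- Step 3 : all but finitely many vectors of `E'` lie in `B`.
  obtain ⟨SB, hSB⟩ := hcomp k₀.succ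
  -- the complement of `SB` is finite
  have hTc : {j : ι | j ∉ SB}.Finite := by
    have hli0 : LinearIndependent ℂ (fun j : {j : ι | j ∉ SB} => E j) :=
      E.linearIndependent.comp _ Subtype.val_injective
    have hdisj : Disjoint (Submodule.span ℂ (Set.range fun j : {j : ι | j ∉ SB} => E j)) B := by
      rw [← Set.image_eq_range, hBdef, hSB]
      exact E.linearIndependent.disjoint_span_image
        (by simp [Set.disjoint_left])
    have hli : LinearIndependent ℂ (fun j : {j : ι | j ∉ SB} => B.mkQ (E j)) := by
      have := hli0.map (f := B.mkQ) (by rw [Submodule.ker_mkQ]; exact hdisj)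
      exact this
    have := hli.lt_aleph0_of_finiteDimensional
    rw [Cardinal.mk_lt_aleph0_iff] at this
    exact Set.toFinite _
  -- membership in `B` via coordinates
  have hmemB : ∀ v : V, v ∈ B ↔ ∀ j ∉ SB, E.coord j v = 0 := by
    intro v
    rw [hBdef, hSB, E.mem_span_image]
    constructor
    · intro h j hj
      by_contra hne
      exact hj (h (by simpa [Module.Basis.coord_apply, Finsupp.mem_support_iff] using hne))
    · intro h j hj
      by_contra hjn
      have := h j hjn
      rw [Module.Basis.coord_apply] at this
      simp only [Finset.mem_coe, Finsupp.mem_support_iff] at hj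
      exact hj this
  -- functionals in `Vs` vanish on all but finitely many `E' i`
  have hphi : ∀ φ ∈ Vs, {i : ι' | φ (E' i) ≠ 0}.Finite := by
    rw [hVs']
    intro φ hφ
    induction hφ using Submodule.span_induction with
    | mem x hx =>
      obtain ⟨i0, rfl⟩ := hx
      refine Set.Finite.subset (Set.finite_singleton i0) ?_
      intro i hi
      simp only [Set.mem_setOf_eq, Module.Basis.coord_apply, Module.Basis.repr_self] at hi
      simp only [Set.mem_singleton_iff]
      by_contra hne
      exact hi (Finsupp.single_eq_of_ne (Ne.symm hne))
    | zero => simp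
    | add x y _ _ hx hy =>
      refine Set.Finite.subset (hx.union hy) ?_
      intro i hi
      simp only [Set.mem_setOf_eq, LinearMap.add_apply] at hi
      by_contra hni
      simp only [Set.mem_union, Set.mem_setOf_eq, not_or, not_not] at hni
      exact hi (by rw [hni.1, hni.2, add_zero])
    | smul c x _ hx =>
      refine Set.Finite.subset hx ?_
      intro i hi
      simp only [Set.mem_setOf_eq, LinearMap.smul_apply] at hi ⊢
      intro h0'
      exact hi (by rw [h0', smul_zero])
  have hSBfin : {i : ι' | E' i ∉ B}.Finite := by
    refine Set.Finite.subset (Set.Finite.biUnion hTc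
      (fun j _ => hphi (E.coord j) (by rw [hVs]; exact Submodule.subset_span ⟨j, rfl⟩))) ?_
    intro i hi
    simp only [Set.mem_setOf_eq] at hi
    rw [hmemB] at hi
    push_neg at hi
    obtain ⟨j, hj1, hj2⟩ := hi
    exact Set.mem_biUnion hj1 hj2
  -- Step 4 : a finite set `S₀` with `A ≤ span (E' '' S₀)`.
  have hAfg : (F k₀.castSucc).FG := Module.Finite.iff_fg.mp hA
  obtain ⟨t, ht⟩ := hAfg
  set S0 : Set ι' := ⋃ v ∈ (t : Set V), ((E'.repr v).support : Set ι') with hS0def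
  have hS0fin : S0.Finite := Set.Finite.biUnion t.finite_toSet (fun v _ => (Finset.finite_toSet _))
  have hAle : F k₀.castSucc ≤ Submodule.span ℂ (⇑E' '' S0) := by
    rw [← ht, Submodule.span_le]
    intro v hv
    have : v ∈ Submodule.span ℂ (⇑E' '' S0) := by
      rw [E'.mem_span_image]
      intro j hj
      exact Set.mem_biUnion hv hj
    exact this
  -- the finite exceptional set S
  set S : Set ι' := S0 ∪ {i : ι' | E' i ∉ B} with hSdef
  have hSfin : S.Finite := hS0fin.union hSBfin
  set U : Submodule ℂ V := Submodule.span ℂ (⇑E' '' S) with hUdef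
  set W : Submodule ℂ V := Submodule.span ℂ (⇑E' '' Sᶜ) with hWdef
  have hUWtop : U ⊔ W = ⊤ := by
    rw [hUdef, hWdef, ← Submodule.span_union, ← Set.image_union, Set.union_compl_self,
      Set.image_univ, E'.span_eq]
  have hUWdisj : Disjoint U W :=
    E'.linearIndependent.disjoint_span_image disjoint_compl_right
  have hWB : W ≤ B := by
    rw [hWdef, Submodule.span_le]
    rintro x ⟨i, hi, rfl⟩
    have : i ∉ {i : ι' | E' i ∉ B} := fun h => hi (Set.mem_union_right _ h)
    simpa [Set.mem_setOf_eq, not_not] using this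
  have hAU : F k₀.castSucc ≤ U :=
    le_trans hAle (Submodule.span_mono (Set.image_mono Set.subset_union_left))
  have hUfin : FiniteDimensional ℂ U := FiniteDimensional.span_of_finite ℂ (hSfin.image _)
  -- adapted spanning sets for the chain `F k ⊓ U` inside `U`
  obtain ⟨s, hsmono, hsspan, hsli⟩ := adapted_flag m (fun k => F k ⊓ U)
    (fun a b hab => inf_le_inf_right U (hmono hab))
  set slast : Set V := s (Fin.last m) with hslastdef
  have hslast_span : Submodule.span ℂ slast = U := by
    have := hsspan (Fin.last m)
    rwa [htop, top_inf_eq] at this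
  have hslastU : slast ⊆ (U : Set V) := fun x hx => by
    rw [← hslast_span]; exact Submodule.subset_span hx
  -- two bases of `U`
  have hliS : LinearIndependent ℂ (fun i : S => E' i) :=
    E'.linearIndependent.comp _ Subtype.val_injective
  have b2 : Module.Basis S ℂ U := by
    refine (Module.Basis.span hliS).map (LinearEquiv.ofEq _ _ ?_)
    rw [← Set.image_eq_range]
  have b1 : Module.Basis slast ℂ U := by
    refine (Module.Basis.span hsli).map (LinearEquiv.ofEq _ _ ?_)
    rw [Subtype.range_coe, hslast_span]
  set g : S ≃ slast := b2.indexEquiv b1 with hgdef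
  -- the new basis as a function
  set f : ι' → V := fun i => if h : i ∈ S then ((g ⟨i, h⟩ : slast) : V) else E' i with hfdef
  have hfS : ∀ i (h : i ∈ S), f i = ((g ⟨i, h⟩ : slast) : V) := fun i h => dif_pos h
  have hfnS : ∀ i, i ∉ S → f i = E' i := fun i h => dif_neg h
  have hrange : Set.range f = slast ∪ ⇑E' '' Sᶜ := by
    apply Set.eq_of_subset_of_subset
    · rintro x ⟨i, rfl⟩
      by_cases h : i ∈ S
      · rw [hfS i h]; exact Set.mem_union_left _ (g ⟨i, h⟩).2
      · rw [hfnS i h]; exact Set.mem_union_right _ ⟨i, h, rfl⟩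
    · rintro x (hx | ⟨i, hi, rfl⟩)
      · refine ⟨(g.symm ⟨x, hx⟩ : S), ?_⟩
        rw [hfS _ (g.symm ⟨x, hx⟩).2]
        simp
      · exact ⟨i, hfnS i hi⟩
  -- linear independence of the set `slast ∪ E' '' Sᶜ`
  have hliW : LinearIndependent ℂ ((↑) : (⇑E' '' Sᶜ) → V) := by
    have : LinearIndependent ℂ (fun i : (Sᶜ : Set ι') => E' i) :=
      E'.linearIndependent.comp _ Subtype.val_injective
    exact LinearIndepOn.id_image (v := ⇑E') (s := Sᶜ) this
  have hTli : LinearIndependent ℂ ((↑) : (slast ∪ ⇑E' '' Sᶜ : Set V) → V) := by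
    refine LinearIndepOn.id_union hsli hliW ?_
    rw [hslast_span]
    exact hUWdisj
  -- injectivity of `f`
  have hfinj : Function.Injective f := by
    intro i j hij
    by_cases hi : i ∈ S <;> by_cases hj : j ∈ S
    · rw [hfS i hi, hfS j hj] at hij
      have := g.injective (Subtype.val_injective hij)
      exact congrArg Subtype.val this
    · exfalso
      rw [hfS i hi, hfnS j hj] at hij
      have h1 : E' j ∈ U := hij ▸ hslastU (g ⟨i, hi⟩).2
      have h2 : E' j ∈ W := Submodule.subset_span ⟨j, hj, rfl⟩
      have := hUWdisj.le_bot ⟨h1, h2⟩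
      exact E'.ne_zero j this
    · exfalso
      rw [hfnS i hi, hfS j hj] at hij
      have h1 : E' i ∈ U := hij ▸ hslastU (g ⟨j, hj⟩).2
      have h2 : E' i ∈ W := Submodule.subset_span ⟨i, hi, rfl⟩
      have := hUWdisj.le_bot ⟨h1, h2⟩
      exact E'.ne_zero i this
    · rw [hfnS i hi, hfnS j hj] at hij
      exact E'.injective hij
  -- `f` is linearly independent
  have hfli : LinearIndependent ℂ f := by
    have hmem : ∀ i, f i ∈ (slast ∪ ⇑E' '' Sᶜ : Set V) := fun i => by
      rw [← hrange]; exact ⟨i, rfl⟩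
    have := hTli.comp (fun i => (⟨f i, hmem i⟩ : (slast ∪ ⇑E' '' Sᶜ : Set V)))
      (fun i j hij => hfinj (congrArg Subtype.val hij))
    exact this
  -- `f` spans
  have hfspan : ⊤ ≤ Submodule.span ℂ (Set.range f) := by
    rw [hrange, Submodule.span_union, hslast_span]
    rw [← hUWtop]
  set E'' : Module.Basis ι' ℂ V := Module.Basis.mk hfli hfspan with hE''def
  have hE''coe : ⇑E'' = f := Module.Basis.coe_mk _ _
  refine ⟨E'', ?_, ?_, ?_⟩
  · -- range E'' \ range E' ⊆ slast
    have hslast_fin : slast.Finite := by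
      have hv : LinearIndependent ℂ (fun x : slast => (⟨x, hslastU x.2⟩ : U)) := by
        apply LinearIndependent.of_comp U.subtype
        exact hsli
      have := hv.lt_aleph0_of_finiteDimensional
      rw [Cardinal.mk_lt_aleph0_iff] at this
      exact Set.toFinite _
    refine Set.Finite.subset hslast_fin ?_
    rw [hE''coe]
    rintro x ⟨⟨i, rfl⟩, hx2⟩
    by_cases hi : i ∈ S
    · rw [hfS i hi]; exact (g ⟨i, hi⟩).2
    · exact absurd ⟨i, (hfnS i hi).symm⟩ hx2
  · -- range E' \ range E'' ⊆ E' '' S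
    refine Set.Finite.subset (hSfin.image ⇑E') ?_
    rintro x ⟨⟨i, rfl⟩, hx2⟩
    by_contra hni
    apply hx2
    have hiS : i ∉ S := fun h => hni ⟨i, h, rfl⟩
    rw [hE''coe]
    exact ⟨i, hfnS i hiS⟩
  · -- the chain is compatible with E''
    intro k
    rw [hE''coe]
    by_cases hk : k ≤ k₀.castSucc
    · -- low case : F k = span (s k)
      have hFk : F k ≤ U := le_trans (hmono hk) hAU
      have hFkU : F k ⊓ U = F k := inf_eq_left.mpr hFk
      have hks : Submodule.span ℂ (s k) = F k := by rw [hsspan k, hFkU]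
      refine ⟨f ⁻¹' (s k), ?_⟩
      have hsub : s k ⊆ Set.range f := by
        intro x hx
        rw [hrange]
        exact Set.mem_union_left _ (hsmono (Fin.le_last k) hx)
      rw [Set.image_preimage_eq_inter_range, Set.inter_eq_left.mpr hsub, hks]
    · -- high case : F k = span (s k) ⊔ W
      have hk' : k₀.succ ≤ k := by
        rw [← Fin.castSucc_lt_iff_succ_le]
        exact lt_of_not_ge hk
      have hWFk : W ≤ F k := le_trans hWB (hmono hk')
      have hmod : (F k ⊓ U) ⊔ W = F k := by
        rw [inf_sup_assoc_of_le _ hWFk, hUWtop, inf_top_eq]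
      refine ⟨f ⁻¹' (s k ∪ ⇑E' '' Sᶜ), ?_⟩
      have hsub : s k ∪ ⇑E' '' Sᶜ ⊆ Set.range f := by
        rw [hrange]
        exact Set.union_subset_union_left _ (hsmono (Fin.le_last k))
      rw [Set.image_preimage_eq_inter_range, Set.inter_eq_left.mpr hsub,
        Submodule.span_union, hsspan k, ← hWdef, hmod]
end

section
/- Let V be countable-dimensional with admissible basis E and F a chain of subspaces of V compatible with E that contains a subspace F₀ which is both infinite-dimensional and infinite-codimensional. Then there exists a basis Ẽ of V, admissible (dual family spanning V_*), such that for every g ∈ GL(E) one has g H(Ẽ) g⁻¹ ⊄ Stab_{GL(E)}(F), where H(Ẽ) is the diagonal subgroup in basis Ẽ. In other words, the stabilizer of F fails to contain a conjugate of the splitting Cartan subgroup H(Ẽ). -/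
open Submodule Function Set

section aux
variable {ι V : Type*} [AddCommGroup V] [Module ℂ V]

open Classical in
/-- The image of the basis vector `E i` under the change-of-basis map, with parameter `s`:
`E (a n) ↦ E (a n) + s • E (b n)`, and identity elsewhere. -/
noncomputable def auxF (E : Module.Basis ι ℂ V) (a b : ℕ → ι) (s : ℂ) (i : ι) : V :=
  if h : ∃ n, a n = i then E i + s • E (b h.choose) else E i

variable (E : Module.Basis ι ℂ V) (a b : ℕ → ι) (s : ℂ)

lemma auxF_a (ha : Injective a) (n : ℕ) :
    auxF E a b s (a n) = E (a n) + s • E (b n) := by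
  rw [auxF, dif_pos ⟨n, rfl⟩]
  congr 3
  exact congrArg b (ha (⟨n, rfl⟩ : ∃ m, a m = a n).choose_spec)

lemma auxF_not {i : ι} (h : ∀ n, a n ≠ i) : auxF E a b s i = E i := by
  rw [auxF, dif_neg]
  rintro ⟨n, hn⟩; exact h n hn

/-- The change-of-basis linear map. -/
noncomputable def auxT : V →ₗ[ℂ] V := E.constr ℂ (auxF E a b s)

lemma auxT_basis (i : ι) : auxT E a b s (E i) = auxF E a b s i :=
  Module.Basis.constr_basis E ℂ _ i

lemma auxT_comp (ha : Injective a) (hab : ∀ m n, a m ≠ b n) :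
    (auxT E a b s).comp (auxT E a b (-s)) = LinearMap.id := by
  apply E.ext; intro i
  by_cases h : ∃ n, a n = i
  · obtain ⟨n, rfl⟩ := h
    rw [LinearMap.comp_apply, auxT_basis, auxF_a E a b _ ha, map_add, map_smul,
      auxT_basis, auxT_basis, auxF_a E a b _ ha,
      auxF_not E a b s (fun m hm => hab m n hm), LinearMap.id_apply]
    module
  · push_neg at h
    rw [LinearMap.comp_apply, auxT_basis, auxF_not E a b _ h, auxT_basis,
      auxF_not E a b s h, LinearMap.id_apply]

/-- The change-of-basis linear equivalence. -/
noncomputable def auxE (ha : Injective a) (hab : ∀ m n, a m ≠ b n) : V ≃ₗ[ℂ] V :=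
  LinearEquiv.ofLinear (auxT E a b 1) (auxT E a b (-1))
    (auxT_comp E a b 1 ha hab)
    (by simpa using auxT_comp E a b (-1) ha hab)

variable (ha : Injective a) (hab : ∀ m n, a m ≠ b n)

lemma auxE_apply (i : ι) : auxE E a b ha hab (E i) = auxF E a b 1 i := by
  rw [auxE, LinearEquiv.ofLinear_apply, auxT_basis]

lemma auxE_symm_apply (i : ι) : (auxE E a b ha hab).symm (E i) = auxF E a b (-1) i := by
  rw [auxE, LinearEquiv.ofLinear_symm_apply, auxT_basis]

/-- The new basis `Ẽ`. -/
noncomputable def auxB : Module.Basis ι ℂ V := E.map (auxE E a b ha hab)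

lemma auxB_a (n : ℕ) : auxB E a b ha hab (a n) = E (a n) + E (b n) := by
  rw [auxB, Module.Basis.map_apply, auxE_apply, auxF_a E a b 1 ha, one_smul]

lemma auxB_not {i : ι} (h : ∀ n, a n ≠ i) : auxB E a b ha hab i = E i := by
  rw [auxB, Module.Basis.map_apply, auxE_apply, auxF_not E a b 1 h]

lemma auxB_coord (i : ι) (x : V) :
    (auxB E a b ha hab).coord i x = E.coord i ((auxE E a b ha hab).symm x) := by
  simp [auxB, Module.Basis.coord_apply, Module.Basis.map_repr]

lemma coord_self (i : ι) : E.coord i (E i) = 1 := by simp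

lemma coord_ne {i j : ι} (h : j ≠ i) : E.coord i (E j) = 0 := by
  rw [Module.Basis.coord_apply, Module.Basis.repr_self, Finsupp.single_eq_of_ne' h]

lemma auxB_coord_not {i : ι} (h : ∀ n, b n ≠ i) :
    (auxB E a b ha hab).coord i = E.coord i := by
  apply E.ext; intro j
  rw [auxB_coord, auxE_symm_apply]
  by_cases hj : ∃ n, a n = j
  · obtain ⟨n, rfl⟩ := hj
    rw [auxF_a E a b _ ha, map_add, map_smul, coord_ne E (h n)]
    simp
  · push_neg at hj
    rw [auxF_not E a b _ hj]

lemma auxB_coord_b (hb : Injective b) (n : ℕ) :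
    (auxB E a b ha hab).coord (b n) = E.coord (b n) - E.coord (a n) := by
  apply E.ext; intro j
  rw [auxB_coord, auxE_symm_apply, LinearMap.sub_apply]
  by_cases hj : ∃ m, a m = j
  · obtain ⟨m, rfl⟩ := hj
    rw [auxF_a E a b _ ha, map_add, map_smul, coord_ne E (hab m n)]
    by_cases hmn : m = n
    · subst hmn
      rw [coord_self, coord_self]
      norm_num
    · rw [coord_ne E (hb.ne hmn), coord_ne E (ha.ne hmn)]
      norm_num
  · push_neg at hj
    rw [auxF_not E a b _ hj, coord_ne E (Ne.symm (hj n)), sub_zero]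

/-- The coordinate functionals of the new basis span the same subspace as those of `E`. -/
lemma auxB_coord_span (hb : Injective b) :
    Submodule.span ℂ (Set.range fun i => (auxB E a b ha hab).coord i) =
      Submodule.span ℂ (Set.range fun i => E.coord i) := by
  apply le_antisymm <;> rw [Submodule.span_le] <;> rintro _ ⟨i, rfl⟩ <;>
    simp only [SetLike.mem_coe]
  · by_cases hi : ∃ n, b n = i
    · obtain ⟨n, rfl⟩ := hi
      rw [auxB_coord_b E a b ha hab hb n]
      exact sub_mem (subset_span ⟨b n, rfl⟩) (subset_span ⟨a n, rfl⟩)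
    · push_neg at hi
      rw [auxB_coord_not E a b ha hab hi]
      exact subset_span ⟨i, rfl⟩
  · by_cases hi : ∃ n, b n = i
    · obtain ⟨n, rfl⟩ := hi
      have h1 : E.coord (b n) =
          (auxB E a b ha hab).coord (b n) + (auxB E a b ha hab).coord (a n) := by
        rw [auxB_coord_b E a b ha hab hb n,
          auxB_coord_not E a b ha hab (fun m hm => hab n m hm.symm)]
        abel
      rw [h1]
      exact add_mem (subset_span ⟨b n, rfl⟩) (subset_span ⟨a n, rfl⟩)
    · push_neg at hi
      rw [← auxB_coord_not E a b ha hab hi]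
      exact subset_span ⟨i, rfl⟩

end aux

/-- Let `E` be an admissible basis of the countable-dimensional space `V`
(dual family spanning `V_*`), and let `𝒞` be a chain of subspaces of `V`, each spanned by a
subset of `E`, containing a subspace `F₀` which is both infinite-dimensional and
infinite-codimensional.  Then there is an admissible basis `Ẽ` of `V` such that for every
`g ∈ GL(E)` the conjugate `g H(Ẽ) g⁻¹` of the diagonal subgroup `H(Ẽ)` is not contained in
the stabilizer of the chain `𝒞`. -/
theorem stmt17 {ι V : Type*} [Countable ι] [AddCommGroup V] [Module ℂ V]
    (E : Module.Basis ι ℂ V) (Vs : Submodule ℂ (Module.Dual ℂ V))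
    (hVs : Vs = Submodule.span ℂ (Set.range fun i => E.coord i))
    (C : Set (Submodule ℂ V)) (hchain : IsChain (· ≤ ·) C)
    (hcomp : ∀ W ∈ C, ∃ S : Set ι, W = Submodule.span ℂ (⇑E '' S))
    (F₀ : Submodule ℂ V) (hF₀ : F₀ ∈ C)
    (hinfdim : ¬ FiniteDimensional ℂ ↥F₀)
    (hinfcodim : ¬ FiniteDimensional ℂ (V ⧸ F₀)) :
    ∃ Et : Module.Basis ι ℂ V, Vs = Submodule.span ℂ (Set.range fun i => Et.coord i) ∧
      ∀ g : V ≃ₗ[ℂ] V, {i | g (E i) ≠ E i}.Finite →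
        ∃ h : V ≃ₗ[ℂ] V, (∀ j, ∃ c : ℂ, h (Et j) = c • Et j) ∧
          ¬ ((fun W => Submodule.map ((g.symm.trans (h.trans g)) : V →ₗ[ℂ] V) W) '' C = C) := by
  classical
  obtain ⟨S₀, hS₀⟩ := hcomp F₀ hF₀
  -- `S₀` is infinite
  have hS₀inf : S₀.Infinite := by
    by_contra hfin
    rw [Set.not_infinite] at hfin
    exact hinfdim (hS₀ ▸ FiniteDimensional.span_of_finite ℂ (hfin.image E))
  -- `S₀ᶜ` is infinite
  have hS₀cinf : S₀ᶜ.Infinite := by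
    by_contra hfin
    rw [Set.not_infinite] at hfin
    apply hinfcodim
    have hsup : F₀ ⊔ Submodule.span ℂ (⇑E '' S₀ᶜ) = ⊤ := by
      rw [hS₀, ← Submodule.span_union, ← Set.image_union, Set.union_compl_self,
        Set.image_univ, Module.Basis.span_eq]
    have hsp : Submodule.span ℂ (⇑F₀.mkQ '' (⇑E '' S₀ᶜ)) = ⊤ := by
      rw [Submodule.span_image, Submodule.map_mkQ_eq_top, hsup]
    exact Module.finite_def.mpr ⟨((hfin.image E).image F₀.mkQ).toFinset, by
      rw [Set.Finite.coe_toFinset]; exact hsp⟩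
  -- pick sequences in `S₀` and `S₀ᶜ`
  set eaEmb := hS₀inf.natEmbedding
  set ebEmb := hS₀cinf.natEmbedding
  set a : ℕ → ι := fun n => (eaEmb n : ι) with ha_def
  set b : ℕ → ι := fun n => (ebEmb n : ι) with hb_def
  have ha : Function.Injective a := fun m n h =>
    eaEmb.injective (Subtype.ext h)
  have hb : Function.Injective b := fun m n h =>
    ebEmb.injective (Subtype.ext h)
  have haS : ∀ n, a n ∈ S₀ := fun n => (eaEmb n).2
  have hbS : ∀ n, b n ∈ S₀ᶜ := fun n => (ebEmb n).2
  have hab : ∀ m n, a m ≠ b n := fun m n h => (hbS n) (h ▸ haS m)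
  -- the new basis
  refine ⟨auxB E a b ha hab, by rw [hVs, auxB_coord_span E a b ha hab hb], ?_⟩
  intro g hgfin
  -- choose `n` outside the support of `g`
  have hfin1 : {n : ℕ | g (E (a n)) ≠ E (a n)}.Finite :=
    Set.Finite.preimage ha.injOn hgfin
  have hfin2 : {n : ℕ | g (E (b n)) ≠ E (b n)}.Finite :=
    Set.Finite.preimage hb.injOn hgfin
  obtain ⟨n, hn⟩ := (hfin1.union hfin2).infinite_compl.nonempty
  simp only [Set.mem_compl_iff, Set.mem_union, not_or, Set.mem_setOf_eq, not_not] at hn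
  obtain ⟨hga, hgb⟩ := hn
  -- hga : g (E (a n)) = E (a n), hgb : g (E (b n)) = E (b n)
  set Et := auxB E a b ha hab with hEt
  -- diagonal map `h`
  set d : ι → ℂ := fun j => if j = b n then (-1 : ℂ) else 1 with hd
  set hmap : V →ₗ[ℂ] V := Et.constr ℂ (fun j => d j • Et j) with hhmap
  have hmap_basis : ∀ j, hmap (Et j) = d j • Et j := fun j => Module.Basis.constr_basis Et ℂ _ j
  have hmap_comp : hmap.comp hmap = LinearMap.id := by
    apply Et.ext; intro j
    rw [LinearMap.comp_apply, hmap_basis, map_smul, hmap_basis, smul_smul, LinearMap.id_apply]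
    have : d j * d j = 1 := by
      simp only [hd]; split_ifs <;> norm_num
    rw [this, one_smul]
  set h : V ≃ₗ[ℂ] V := LinearEquiv.ofLinear hmap hmap hmap_comp hmap_comp with hh
  have h_apply : ∀ x, h x = hmap x := fun x => rfl
  refine ⟨h, fun j => ⟨d j, by rw [h_apply, hmap_basis]⟩, ?_⟩
  intro heq
  -- the conjugated map
  set φ : V →ₗ[ℂ] V := ((g.symm.trans (h.trans g)) : V →ₗ[ℂ] V) with hφ
  have hφ_apply : ∀ x, φ x = g (h (g.symm x)) := fun x => rfl
  -- φ is an involution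
  have hφφ : φ.comp φ = LinearMap.id := by
    apply LinearMap.ext; intro x
    rw [LinearMap.comp_apply, hφ_apply, hφ_apply, LinearEquiv.symm_apply_apply,
      LinearMap.id_apply]
    have hhx : h (h (g.symm x)) = g.symm x := by
      rw [h_apply, h_apply]
      exact LinearMap.congr_fun hmap_comp (g.symm x)
    rw [hhx, LinearEquiv.apply_symm_apply]
  have hmapinv : ∀ W : Submodule ℂ V, Submodule.map φ (Submodule.map φ W) = W := by
    intro W
    rw [← Submodule.map_comp, hφφ, Submodule.map_id]
  -- φ moves E (a n) out of F₀
  have hEan : E (a n) = Et (a n) - Et (b n) := by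
    rw [show Et (a n) = E (a n) + E (b n) from auxB_a E a b ha hab n,
      show Et (b n) = E (b n) from auxB_not E a b ha hab (fun m hm => hab m n hm)]
    abel
  have hgsa : g.symm (E (a n)) = E (a n) := by
    conv_lhs => rw [← hga]
    exact g.symm_apply_apply _
  have hEta : Et (a n) = E (a n) + E (b n) := auxB_a E a b ha hab n
  have hEtb : Et (b n) = E (b n) := auxB_not E a b ha hab (fun m hm => hab m n hm)
  have hda : d (a n) = 1 := by simp [hd, hab n n]
  have hdb : d (b n) = -1 := by simp [hd]
  have hha : hmap (E (a n)) = E (a n) + (2 : ℂ) • E (b n) := by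
    conv_lhs => rw [hEan]
    rw [map_sub, hmap_basis, hmap_basis, hda, hdb, hEta, hEtb]
    module
  have hφa : φ (E (a n)) = E (a n) + (2 : ℂ) • E (b n) := by
    rw [hφ_apply, hgsa, h_apply, hha, map_add, map_smul, hga, hgb]
  -- F₀ is contained in the kernel of the coordinate functional at `b n`
  have hker : F₀ ≤ LinearMap.ker (E.coord (b n)) := by
    rw [hS₀, Submodule.span_le]
    rintro _ ⟨j, hj, rfl⟩
    rw [SetLike.mem_coe, LinearMap.mem_ker, coord_ne E (fun hc => (hbS n) (by rw [← hc]; exact hj))]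
  have hanF : E (a n) ∈ F₀ := by
    rw [hS₀]
    exact Submodule.subset_span (Set.mem_image_of_mem E (haS n))
  have hφaF : φ (E (a n)) ∉ F₀ := by
    intro hmem
    have := hker hmem
    rw [LinearMap.mem_ker, hφa, map_add, map_smul, coord_ne E (hab n n),
      coord_self] at this
    norm_num at this
  -- The image of F₀ under φ is in C
  have hmem : Submodule.map φ F₀ ∈ C := by
    rw [← heq]
    exact Set.mem_image_of_mem _ hF₀
  -- φ(F₀) = F₀ by the chain property and involutivity
  have hFeq : Submodule.map φ F₀ = F₀ := by
    rcases hchain.total hmem hF₀ with hle | hle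
    · apply le_antisymm hle
      calc F₀ = Submodule.map φ (Submodule.map φ F₀) := (hmapinv F₀).symm
        _ ≤ Submodule.map φ F₀ := Submodule.map_mono hle
    · apply le_antisymm _ hle
      calc Submodule.map φ F₀ ≤ Submodule.map φ (Submodule.map φ F₀) := Submodule.map_mono hle
        _ = F₀ := hmapinv F₀
  exact hφaF (hFeq ▸ Submodule.mem_map_of_mem hanF)
end

section
/- Let V be a countable-dimensional complex vector space, E a basis, and F a subspace of V. Then F is weakly E-compatible (i.e. the chain {0 ⊂ F ⊂ V} is compatible with some basis differing from E by finitely many vectors) if and only if F contains a finite-codimensional subspace of F spanned by a subset of E, i.e. there exists I ⊂ E with span(I) ⊆ F and dim F / span(I) < ∞. -/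
open Set Submodule

/-- A subspace `F` of a countable-dimensional complex vector space with
basis `E` is weakly `E`-compatible (i.e. spanned by a subset of some basis differing from `E`
by finitely many vectors) if and only if `F` contains a subspace of finite codimension in `F`
which is spanned by a subset of `E`. -/
theorem stmt19 {ι V : Type*} [Countable ι] [AddCommGroup V] [Module ℂ V]
    (E : Module.Basis ι ℂ V) (F : Submodule ℂ V) :
    (∃ E' : Module.Basis ι ℂ V,
      (Set.range ⇑E' \ Set.range ⇑E).Finite ∧ (Set.range ⇑E \ Set.range ⇑E').Finite ∧
      ∃ S : Set ι, F = Submodule.span ℂ (⇑E' '' S)) ↔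
    (∃ S : Set ι, Submodule.span ℂ (⇑E '' S) ≤ F ∧
      FiniteDimensional ℂ (↥F ⧸ Submodule.comap F.subtype (Submodule.span ℂ (⇑E '' S)))) := by
  classical
  constructor
  · rintro ⟨E', hfin1, hfin2, S, hF⟩
    set D : Set ι := {i | i ∈ S ∧ E' i ∉ Set.range ⇑E} with hD
    have hDfin : D.Finite := by
      have himg : ⇑E' '' D ⊆ Set.range ⇑E' \ Set.range ⇑E := by
        rintro _ ⟨i, ⟨hiS, hi⟩, rfl⟩; exact ⟨⟨i, rfl⟩, hi⟩
      exact Set.Finite.of_finite_image (hfin1.subset himg) E'.injective.injOn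
    set S' : Set ι := {j | E j ∈ ⇑E' '' (S \ D)} with hS'
    have hES' : ⇑E '' S' = ⇑E' '' (S \ D) := by
      apply Set.Subset.antisymm
      · rintro _ ⟨j, hj, rfl⟩; exact hj
      · rintro x hx
        obtain ⟨i, ⟨hiS, hiD⟩, rfl⟩ := hx
        have hmem : E' i ∈ Set.range ⇑E := by
          by_contra h; exact hiD ⟨hiS, h⟩
        obtain ⟨j, hj⟩ := hmem
        refine ⟨j, ?_, hj⟩
        show E j ∈ ⇑E' '' (S \ D)
        rw [hj]
        exact ⟨i, ⟨hiS, hiD⟩, rfl⟩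
    have hG'le : Submodule.span ℂ (⇑E '' S') ≤ F := by
      rw [hES', hF]
      exact span_mono (Set.image_mono Set.diff_subset)
    set W := Submodule.span ℂ (⇑E' '' (S ∩ D)) with hW
    have hWfd : FiniteDimensional ℂ ↥W :=
      FiniteDimensional.span_of_finite ℂ ((hDfin.subset Set.inter_subset_right).image _)
    have hWF : W ≤ F := by
      rw [hF]; exact span_mono (Set.image_mono Set.inter_subset_left)
    have hsup : Submodule.span ℂ (⇑E '' S') ⊔ W = F := by
      rw [hES', hF, hW, ← span_union, ← Set.image_union, Set.diff_union_inter]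
    refine ⟨S', hG'le, ?_⟩
    set p := Submodule.comap F.subtype (Submodule.span ℂ (⇑E '' S')) with hp
    set φ : ↥W →ₗ[ℂ] ↥F ⧸ p := p.mkQ ∘ₗ Submodule.inclusion hWF with hφ
    have hφsurj : Function.Surjective φ := by
      intro x
      obtain ⟨⟨f, hf⟩, rfl⟩ := p.mkQ_surjective x
      have hf' : f ∈ Submodule.span ℂ (⇑E '' S') ⊔ W := hsup.symm ▸ hf
      rw [Submodule.mem_sup] at hf'
      obtain ⟨g, hg, w, hw, rfl⟩ := hf'
      refine ⟨⟨w, hw⟩, ?_⟩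
      have h0 : φ ⟨w, hw⟩ = p.mkQ ⟨w, hWF hw⟩ := rfl
      rw [h0]
      refine (Submodule.Quotient.eq p).mpr ?_
      show (⟨w, hWF hw⟩ : F) - ⟨g + w, hf⟩ ∈ p
      have : (⟨w, hWF hw⟩ : F) - ⟨g + w, hf⟩ = ⟨-g, by simpa using F.neg_mem (hG'le hg)⟩ := by
        ext; simp
      rw [this]
      simpa [hp] using (Submodule.span ℂ (⇑E '' S')).neg_mem hg
    exact Module.Finite.of_surjective φ hφsurj
  · rintro ⟨S, hle, hfd⟩
    set G := Submodule.span ℂ (⇑E '' S) with hG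
    set p := Submodule.comap F.subtype G with hp
    obtain ⟨Φ, hΦ⟩ := Module.finite_def.mp hfd
    have hsurj := p.mkQ_surjective
    choose lift hlift using hsurj
    set T : Set V := F.subtype '' (lift '' ↑Φ) with hT
    have hTfin : T.Finite := (Φ.finite_toSet.image _).image _
    have hTF : T ⊆ (F : Set V) := by rintro _ ⟨y, -, rfl⟩; exact y.2
    have hFsup : F = G ⊔ Submodule.span ℂ T := by
      apply le_antisymm
      · intro f hf
        have h1 : p.mkQ ⟨f, hf⟩ ∈ Submodule.span ℂ (⇑p.mkQ '' (lift '' ↑Φ)) := by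
          have : ⇑p.mkQ '' (lift '' ↑Φ) = ↑Φ := by
            rw [Set.image_image]; simp only [hlift, Set.image_id']
          rw [this, hΦ]; trivial
        rw [← Submodule.map_span] at h1
        obtain ⟨y, hy, hyx⟩ := h1
        have hdiff : y - (⟨f, hf⟩ : F) ∈ p := (Submodule.Quotient.eq p).mp hyx
        have hfG : f - (y : V) ∈ G := by
          have : (y : V) - f ∈ G := hdiff
          simpa using G.neg_mem this
        have hyT : (y : V) ∈ Submodule.span ℂ T := by
          have := Submodule.mem_map_of_mem (f := F.subtype) hy
          rwa [Submodule.map_span, ← hT] at this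
        have : f = (f - (y : V)) + (y : V) := by abel
        rw [this]
        exact add_mem (mem_sup_left hfG) (mem_sup_right hyT)
      · exact sup_le hle (span_le.mpr hTF)
    -- project T off the S-coordinates
    set h : V → V := fun t => t - E.repr.symm ((E.repr t).filter (· ∈ S)) with hh
    have hcorr : ∀ t : V, E.repr.symm ((E.repr t).filter (· ∈ S)) ∈ G := by
      intro t
      rw [hG, Module.Basis.mem_span_image]
      intro j hj
      rw [LinearEquiv.apply_symm_apply] at hj
      rw [Finsupp.support_filter] at hj
      exact (Finset.mem_filter.mp hj).2
    have hreprh : ∀ t : V, ∀ j ∈ S, E.repr (h t) j = 0 := by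
      intro t j hj
      rw [hh]
      simp only [map_sub, LinearEquiv.apply_symm_apply, Finsupp.sub_apply]
      rw [Finsupp.filter_apply_pos _ _ hj, sub_self]
    set H : Set V := h '' T with hH
    have hHfin : H.Finite := hTfin.image _
    have hHF : H ⊆ (F : Set V) := by
      rintro _ ⟨t, ht, rfl⟩
      exact F.sub_mem (hTF ht) (hle (hcorr t))
    have hsupH : G ⊔ Submodule.span ℂ H = G ⊔ Submodule.span ℂ T := by
      apply le_antisymm
      · refine sup_le le_sup_left (span_le.mpr ?_)
        rintro _ ⟨t, ht, rfl⟩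
        exact sub_mem (mem_sup_right (subset_span ht)) (mem_sup_left (hcorr t))
      · refine sup_le le_sup_left (span_le.mpr ?_)
        intro t ht
        set c := E.repr.symm ((E.repr t).filter (· ∈ S)) with hc
        have hts : t = c + (t - c) := by abel
        rw [hts]
        exact add_mem (mem_sup_left (hcorr t))
          (mem_sup_right (subset_span ⟨t, ht, rfl⟩))
    obtain ⟨s, hsH, hspan_s, hli⟩ := exists_linearIndependent ℂ H
    have hsfin : s.Finite := hHfin.subset hsH
    set t : Set V := s ∪ Set.range ⇑E with ht
    have hspan_t : ⊤ ≤ Submodule.span ℂ t := by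
      rw [ht, span_union, E.span_eq]
      exact le_sup_right
    set b : Set V := (linearIndependent_subtype_iff.mp hli).extend (Set.subset_union_left : s ⊆ t) with hb
    have hs_sub : s ⊆ b := (linearIndependent_subtype_iff.mp hli).subset_extend _
    have hb_sub : b ⊆ t := (linearIndependent_subtype_iff.mp hli).extend_subset _
    have ht_span : t ⊆ ↑(Submodule.span ℂ b) := (linearIndependent_subtype_iff.mp hli).subset_span_extend _
    set B : Module.Basis ↥b ℂ V := Module.Basis.extendLe (linearIndependent_subtype_iff.mp hli) Set.subset_union_left hspan_t with hB
    have hBrange : Set.range ⇑B = b := Module.Basis.range_extendLe _ _ _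
    set e : ↥b ≃ ι := B.indexEquiv E with he
    set E' : Module.Basis ι ℂ V := B.reindex e with hE'
    have hE'range : Set.range ⇑E' = b := by
      rw [hE', Module.Basis.range_reindex, hBrange]
    -- key claim
    have hEb : ∀ j : ι, (∀ x ∈ s, E.repr x j = 0) → E j ∈ b := by
      intro j hjz
      by_contra hnb
      have hEjspan : E j ∈ Submodule.span ℂ b := ht_span (Or.inr ⟨j, rfl⟩)
      set K : Submodule ℂ V := LinearMap.ker ((Finsupp.lapply j) ∘ₗ (E.repr : V →ₗ[ℂ] ι →₀ ℂ)) with hK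
      have hbK : b ⊆ (K : Set V) := by
        intro x hx
        rcases hb_sub hx with hxs | ⟨j', rfl⟩
        · simpa [hK, LinearMap.mem_ker] using hjz x hxs
        · have hne : j' ≠ j := by rintro rfl; exact hnb hx
          simp [hK, LinearMap.mem_ker, Module.Basis.repr_self, Finsupp.single_apply, hne]
      have : E j ∈ K := (span_le.mpr hbK) hEjspan
      simp [hK, LinearMap.mem_ker, Module.Basis.repr_self] at this
    have hsS : ∀ x ∈ s, ∀ j ∈ S, E.repr x j = 0 := by
      intro x hx j hj
      obtain ⟨t', ht', rfl⟩ := hsH hx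
      exact hreprh t' j hj
    refine ⟨E', ?_, ?_, ?_⟩
    · rw [hE'range]
      exact hsfin.subset (fun x hx => (hb_sub hx.1).resolve_right hx.2)
    · rw [hE'range]
      have : Set.range ⇑E \ b ⊆ ⇑E '' (⋃ x ∈ s, ↑(E.repr x).support) := by
        rintro _ ⟨⟨j, rfl⟩, hjb⟩
        have : ¬ (∀ x ∈ s, E.repr x j = 0) := fun hz => hjb (hEb j hz)
        push_neg at this
        obtain ⟨x, hxs, hxj⟩ := this
        exact ⟨j, Set.mem_biUnion hxs (Finsupp.mem_support_iff.mpr hxj), rfl⟩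
      exact ((hsfin.biUnion (fun x _ => (E.repr x).support.finite_toSet)).image _).subset this
    · refine ⟨⇑E' ⁻¹' (⇑E '' S ∪ s), ?_⟩
      have hsub_b : ⇑E '' S ∪ s ⊆ b := by
        rintro x (⟨j, hj, rfl⟩ | hxs)
        · exact hEb j (fun y hy => hsS y hy j hj)
        · exact hs_sub hxs
      have himg : ⇑E' '' (⇑E' ⁻¹' (⇑E '' S ∪ s)) = ⇑E '' S ∪ s := by
        rw [Set.image_preimage_eq_inter_range, hE'range,
          Set.inter_eq_self_of_subset_left hsub_b]
      rw [himg, span_union, ← hG, hspan_s, hsupH, ← hFsup]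
end
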